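/- Fix n ≥ 1 and an n×n integer matrix B0. The following are equivalent: (1) (Property D) for every word u with letters in {1,…,n} and every word w with letters in {1,…,n}, writing B = B^{B0;u}, one has (D^{B;w})^T = D^{(−B^{B;w})^T; rev(w)}; (2) (Property R) for every word u, every word w = (k_1,…,k_m), and every index k ∈ {1,…,n}, writing B = B^{B0;u} and B' = μ_k(B), one has D^{B'; k·w} = J_k · D^{B;w} + max( [B^{k•}]_+ · D^{B;w}, [−B^{k•}]_+ · D^{B;w} ), where k·w = (k,k_1,…,k_m). -/

import Mathlib

open Matrix

/-- Entrywise positive part `[A]₊`. -/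
def posPart {n : ℕ} (A : Matrix (Fin n) (Fin n) ℤ) : Matrix (Fin n) (Fin n) ℤ :=
  fun i j => max (A i j) 0

/-- Entrywise absolute value `|A|`. -/
def absMat {n : ℕ} (A : Matrix (Fin n) (Fin n) ℤ) : Matrix (Fin n) (Fin n) ℤ :=
  fun i j => |A i j|

/-- Entrywise maximum of two matrices. -/
def matMax {n : ℕ} (A B : Matrix (Fin n) (Fin n) ℤ) : Matrix (Fin n) (Fin n) ℤ :=
  fun i j => max (A i j) (B i j)

/-- `J k`: the identity matrix with the `(k,k)` entry replaced by `-1`. -/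
def Jmat {n : ℕ} (k : Fin n) : Matrix (Fin n) (Fin n) ℤ :=
  Matrix.diagonal (fun i => if i = k then -1 else 1)

/-- `A^{k•}`: the matrix agreeing with `A` in row `k` and zero elsewhere. -/
def rowSel {n : ℕ} (k : Fin n) (A : Matrix (Fin n) (Fin n) ℤ) : Matrix (Fin n) (Fin n) ℤ :=
  fun i j => if i = k then A i j else 0

/-- `A^{•k}`: the matrix agreeing with `A` in column `k` and zero elsewhere. -/
def colSel {n : ℕ} (k : Fin n) (A : Matrix (Fin n) (Fin n) ℤ) : Matrix (Fin n) (Fin n) ℤ :=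
  fun i j => if j = k then A i j else 0

/-- Fomin–Zelevinsky matrix mutation `μ_k`. -/
def mutB {n : ℕ} (k : Fin n) (B : Matrix (Fin n) (Fin n) ℤ) : Matrix (Fin n) (Fin n) ℤ :=
  fun i j =>
    if i = k ∨ j = k then -B i j
    else B i j + max (B i k) 0 * max (B k j) 0 - max (-B i k) 0 * max (-B k j) 0

/-- One step of the simultaneous `(B, D)` recursion along an edge labeled `k`:
`B` mutates and `D` evolves by the Fomin–Zelevinsky final-seed recursion for
denominator vectors. -/
def BDstep {n : ℕ} (s : Matrix (Fin n) (Fin n) ℤ × Matrix (Fin n) (Fin n) ℤ) (k : Fin n) :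
    Matrix (Fin n) (Fin n) ℤ × Matrix (Fin n) (Fin n) ℤ :=
  (mutB k s.1,
   s.2 * Jmat k + matMax (s.2 * posPart (colSel k s.1)) (s.2 * posPart (colSel k (-s.1))))

/-- The pair `(B^{B0;w}, D^{B0;w})` obtained from `(B0, -I)` by iterating along a word `w`. -/
def BDword {n : ℕ} (B0 : Matrix (Fin n) (Fin n) ℤ) (w : List (Fin n)) :
    Matrix (Fin n) (Fin n) ℤ × Matrix (Fin n) (Fin n) ℤ :=
  w.foldl BDstep (B0, -(1 : Matrix (Fin n) (Fin n) ℤ))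

/-- The exchange matrix `B^{B0;w}` at the end of the word `w`. -/
def Bword {n : ℕ} (B0 : Matrix (Fin n) (Fin n) ℤ) (w : List (Fin n)) :
    Matrix (Fin n) (Fin n) ℤ := (BDword B0 w).1

/-- The denominator matrix `D^{B0;w}` at the end of the word `w`. -/
def Dword {n : ℕ} (B0 : Matrix (Fin n) (Fin n) ℤ) (w : List (Fin n)) :
    Matrix (Fin n) (Fin n) ℤ := (BDword B0 w).2

-- auxiliary lemmas
lemma matMax_comm {n : ℕ} (A B : Matrix (Fin n) (Fin n) ℤ) : matMax A B = matMax B A := by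
  funext i j; exact max_comm _ _

lemma matMax_transpose {n : ℕ} (A B : Matrix (Fin n) (Fin n) ℤ) :
    (matMax A B)ᵀ = matMax Aᵀ Bᵀ := rfl

lemma Jmat_transpose {n : ℕ} (k : Fin n) : (Jmat k)ᵀ = Jmat k := by
  simp [Jmat, Matrix.diagonal_transpose]

lemma posPart_rowSel_transpose {n : ℕ} (k : Fin n) (A : Matrix (Fin n) (Fin n) ℤ) :
    (posPart (rowSel k A))ᵀ = posPart (colSel k Aᵀ) := by
  funext i j
  simp [_root_.posPart, rowSel, colSel, Matrix.transpose_apply]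

lemma posPart_colSel_transpose {n : ℕ} (k : Fin n) (A : Matrix (Fin n) (Fin n) ℤ) :
    (posPart (colSel k A))ᵀ = posPart (rowSel k Aᵀ) := by
  funext i j
  simp [_root_.posPart, rowSel, colSel, Matrix.transpose_apply]

lemma mutB_mutB {n : ℕ} (k : Fin n) (B : Matrix (Fin n) (Fin n) ℤ) :
    mutB k (mutB k B) = B := by
  funext i j
  by_cases hi : i = k
  · simp [mutB, hi]
  · by_cases hj : j = k
    · simp [mutB, hj]
    · simp only [mutB, hi, hj, or_self, if_false]
      simp [hi, hj]

lemma mutB_sigma {n : ℕ} (k : Fin n) (B : Matrix (Fin n) (Fin n) ℤ) :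
    mutB k (-Bᵀ) = -(mutB k B)ᵀ := by
  funext i j
  by_cases hi : i = k
  · simp [mutB, hi]
  · by_cases hj : j = k
    · simp [mutB, hj]
    · simp only [mutB, hi, hj, or_self, if_false, Matrix.neg_apply, Matrix.transpose_apply]
      simp [hi, hj]
      ring

def mfold {n : ℕ} (w : List (Fin n)) (B : Matrix (Fin n) (Fin n) ℤ) :
    Matrix (Fin n) (Fin n) ℤ := w.foldl (fun B k => mutB k B) B

lemma foldl_BDstep_fst {n : ℕ} (w : List (Fin n)) :
    ∀ (B D : Matrix (Fin n) (Fin n) ℤ), (w.foldl BDstep (B, D)).1 = mfold w B := by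
  induction w with
  | nil => intro B D; rfl
  | cons k w ih => intro B D; simpa [mfold, List.foldl_cons, BDstep] using ih (mutB k B) _

lemma Bword_eq {n : ℕ} (B0 : Matrix (Fin n) (Fin n) ℤ) (w : List (Fin n)) :
    Bword B0 w = mfold w B0 := foldl_BDstep_fst w B0 _

lemma mfold_append {n : ℕ} (w v : List (Fin n)) (B : Matrix (Fin n) (Fin n) ℤ) :
    mfold (w ++ v) B = mfold v (mfold w B) := List.foldl_append

lemma mfold_sigma {n : ℕ} (w : List (Fin n)) :
    ∀ B : Matrix (Fin n) (Fin n) ℤ, mfold w (-Bᵀ) = -(mfold w B)ᵀ := by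
  induction w with
  | nil => intro B; rfl
  | cons k w ih => intro B; simp only [mfold, List.foldl_cons] at *; rw [mutB_sigma]; exact ih _

lemma mfold_reverse {n : ℕ} (w : List (Fin n)) :
    ∀ B : Matrix (Fin n) (Fin n) ℤ, mfold w.reverse (mfold w B) = B := by
  induction w with
  | nil => intro B; rfl
  | cons k w ih =>
      intro B
      rw [List.reverse_cons, mfold_append]
      show mfold [k] _ = _
      have : mfold (k :: w) B = mfold w (mutB k B) := rfl
      rw [this, ih (mutB k B)]
      show mutB k (mutB k B) = B
      exact mutB_mutB k B

lemma Bword_cons {n : ℕ} (k : Fin n) (B : Matrix (Fin n) (Fin n) ℤ) (w : List (Fin n)) :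
    Bword B (k :: w) = Bword (mutB k B) w := by
  rw [Bword_eq, Bword_eq]; rfl

lemma Bword_append_single {n : ℕ} (k : Fin n) (B : Matrix (Fin n) (Fin n) ℤ) (u : List (Fin n)) :
    Bword B (u ++ [k]) = mutB k (Bword B u) := by
  rw [Bword_eq, Bword_eq, mfold_append]; rfl

lemma Dword_append_single {n : ℕ} (k : Fin n) (B0 : Matrix (Fin n) (Fin n) ℤ) (w : List (Fin n)) :
    Dword B0 (w ++ [k]) = Dword B0 w * Jmat k +
      matMax (Dword B0 w * posPart (colSel k (Bword B0 w)))
             (Dword B0 w * posPart (colSel k (-(Bword B0 w)))) := by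
  unfold Dword Bword BDword
  rw [List.foldl_append]
  rfl


/-- **Theorem (equivalence of Properties D and R).**
Fix `n ≥ 1` and an `n×n` integer exchange matrix `B0`.  Property D (D-matrix duality,
for all choices of initial vertex `u` and target word `w`) holds if and only if
Property R (the initial-seed-mutation recursion, for all `u`, `w`, `k`) holds. -/
theorem propertyD_iff_propertyR {n : ℕ} (hn : 1 ≤ n) (B0 : Matrix (Fin n) (Fin n) ℤ) :
    (∀ u w : List (Fin n),
        (Dword (Bword B0 u) w)ᵀ = Dword (-(Bword (Bword B0 u) w))ᵀ w.reverse) ↔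
    (∀ u w : List (Fin n), ∀ k : Fin n,
        Dword (mutB k (Bword B0 u)) (k :: w) =
          Jmat k * Dword (Bword B0 u) w +
            matMax (posPart (rowSel k (Bword B0 u)) * Dword (Bword B0 u) w)
              (posPart (rowSel k (-(Bword B0 u))) * Dword (Bword B0 u) w)) := by
  constructor
  · -- D ⇒ R
    intro hD u w k
    set B := Bword B0 u with hB
    have h1 := hD (u ++ [k]) (k :: w)
    rw [Bword_append_single k B0 u, ← hB] at h1
    rw [Bword_cons, mutB_mutB] at h1
    rw [List.reverse_cons] at h1
    set C : Matrix (Fin n) (Fin n) ℤ := (-(Bword B w))ᵀ with hC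
    have e3 : Bword C w.reverse = -Bᵀ := by
      rw [Bword_eq, hC, Matrix.transpose_neg, Bword_eq, mfold_sigma, mfold_reverse]
    have e4 : Dword C w.reverse = (Dword B w)ᵀ := (hD u w).symm
    have h2 : Dword (mutB k B) (k :: w) = (Dword C (w.reverse ++ [k]))ᵀ := by
      rw [← h1, Matrix.transpose_transpose]
    rw [h2, Dword_append_single, e3, e4]
    simp only [neg_neg, Matrix.transpose_add, matMax_transpose, Matrix.transpose_mul,
      Matrix.transpose_transpose, Jmat_transpose, posPart_colSel_transpose, Matrix.transpose_neg]
    rw [matMax_comm]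
  · -- R ⇒ D
    intro hR u w
    induction w generalizing u with
    | nil => simp [Dword, BDword]
    | cons k w' ih =>
      set B := Bword B0 u with hB
      have hstep := hR (u ++ [k]) w' k
      rw [Bword_append_single k B0 u, ← hB, mutB_mutB] at hstep
      have hih := ih (u ++ [k])
      rw [Bword_append_single k B0 u, ← hB] at hih
      rw [List.reverse_cons, Bword_cons]
      set C : Matrix (Fin n) (Fin n) ℤ := (-(Bword (mutB k B) w'))ᵀ with hC
      have e3 : Bword C w'.reverse = -(mutB k B)ᵀ := by
        rw [Bword_eq, hC, Matrix.transpose_neg, Bword_eq, mfold_sigma, mfold_reverse]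
      rw [Dword_append_single, e3, ← hih, hstep]
      simp only [neg_neg, Matrix.transpose_add, matMax_transpose, Matrix.transpose_mul,
        Matrix.transpose_transpose, Jmat_transpose, posPart_rowSel_transpose, Matrix.transpose_neg]
      rw [matMax_comm]
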